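/- Let n ≥ 2. There exists a constant C_n > 0, depending only on n, such that the following holds. Let 0 < K_− ≤ K ≤ K_+, h > 0, b > 0 with b² ≥ h/K_−, let w : ℝ^{n−1} → ℝ be measurable with K_−|x'|² ≤ w(x') ≤ K_+|x'|² for all |x'| < b, and set D_{b,h} = { x = (x', x_n) ∈ ℝⁿ : |x'| < b, w(x') < x_n < h }. Then for all τ > 0, every unit vector v̂' ∈ ℝ^{n−1}, and ξ = iτ(v̂', 0) − τe_n, one has |∫_{{K|x'|² < x_n < h}} E_ξ(x) dx − ∫_{D_{b,h}} E_ξ(x) dx| ≤ C_n (K_−^{−(n−1)/2} − K_+^{−(n−1)/2}) τ^{−(n+1)/2}. -/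

import Mathlib

open MeasureTheory

lemma my_integrable_gauss {V : Type*} [NormedAddCommGroup V] [InnerProductSpace ℝ V]
    [FiniteDimensional ℝ V] [MeasurableSpace V] [BorelSpace V] {b : ℝ} (hb : 0 < b) :
    Integrable (fun v : V => Real.exp (-b * ‖v‖ ^ 2)) := by
  have h1 := GaussianFourier.integrable_cexp_neg_mul_sq_norm_add (V := V)
      (b := (b : ℂ)) (by simpa using hb) 0 0
  have h2 := h1.norm
  refine h2.congr (Filter.Eventually.of_forall fun v => ?_)
  simp only [Complex.norm_exp]
  congr 1
  have : ((inner ℝ (0 : V) v : ℝ) : ℂ) = 0 := by simp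
  rw [this, mul_zero, add_zero]
  have : (-(b:ℂ) * (‖v‖:ℂ) ^ 2) = ((-b * ‖v‖^2 : ℝ) : ℂ) := by push_cast; ring
  rw [this, Complex.ofReal_re]

lemma my_inner_bound (τ a c h : ℝ) (hτ : 0 < τ) (hac : a ≤ c) :
    ∫ t in Set.Icc a (min c h), Real.exp (-τ * t)
      ≤ (Real.exp (-τ * a) - Real.exp (-τ * c)) / τ := by
  have hrhs : 0 ≤ (Real.exp (-τ * a) - Real.exp (-τ * c)) / τ := by
    apply div_nonneg _ hτ.le
    have : -τ * c ≤ -τ * a := by nlinarith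
    linarith [Real.exp_le_exp.2 this]
  by_cases hle : a ≤ min c h
  · have hderiv : ∀ t ∈ Set.uIcc a (min c h),
        HasDerivAt (fun t => Real.exp (-τ * t) / (-τ)) (Real.exp (-τ * t)) t := by
      intro t _
      have h1 : HasDerivAt (fun t : ℝ => -τ * t) (-τ) t := by
        simpa using (hasDerivAt_id t).const_mul (-τ)
      have h2 := (h1.exp).div_const (-τ)
      rwa [mul_div_assoc, div_self (neg_ne_zero.2 hτ.ne'), mul_one] at h2
    have hcont : ContinuousOn (fun t => Real.exp (-τ * t)) (Set.uIcc a (min c h)) :=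
      (Real.continuous_exp.comp (continuous_const.mul continuous_id)).continuousOn
    have hint := intervalIntegral.integral_eq_sub_of_hasDerivAt hderiv
      (hcont.intervalIntegrable)
    rw [MeasureTheory.integral_Icc_eq_integral_Ioc, ← intervalIntegral.integral_of_le hle, hint]
    have hMc : min c h ≤ c := min_le_left _ _
    have hexp : Real.exp (-τ * c) ≤ Real.exp (-τ * min c h) := by
      apply Real.exp_le_exp.2; nlinarith
    have heq : Real.exp (-τ * min c h) / -τ - Real.exp (-τ * a) / -τ
        = (Real.exp (-τ * a) - Real.exp (-τ * min c h)) / τ := by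
      rw [div_neg, div_neg]
      ring
    rw [heq]
    gcongr
  · rw [Set.Icc_eq_empty hle]
    simpa using hrhs

lemma my_rpow_eq {x τ k : ℝ} (hx : 0 ≤ x) (hτ : 0 < τ) (hk : 0 < k) (m : ℝ) :
    (x / (τ * k)) ^ m = x ^ m * τ ^ (-m) * k ^ (-m) := by
  rw [Real.div_rpow hx (by positivity), Real.mul_rpow hτ.le hk.le,
    Real.rpow_neg hτ.le, Real.rpow_neg hk.le, div_eq_mul_inv, mul_inv]
  ring

set_option maxHeartbeats 1000000 in
/-- For `n ≥ 2` there is `C_n > 0` depending only on `n` such that: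
for `0 < K_− ≤ K ≤ K_+`, `h > 0`, `b > 0` with `b² ≥ h/K_−`, any measurable
`w : ℝ^{n−1} → ℝ` with `K_−|x'|² ≤ w(x') ≤ K_+|x'|²` for `|x'| < b`, and
`D_{b,h} = {x : |x'| < b, w(x') < x_n < h}`, one has for all `τ > 0`, unit `v̂'`,
`ξ = iτ(v̂',0) − τe_n`:
`|∫_{K|x'|² < x_n < h} E_ξ − ∫_{D_{b,h}} E_ξ| ≤ C_n (K_−^{−(n−1)/2} − K_+^{−(n−1)/2}) τ^{−(n+1)/2}`. -/
theorem cgo_I2_estimate (n : ℕ) (hn : 2 ≤ n) :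
    ∃ C : ℝ, 0 < C ∧
      ∀ (Km K Kp h b : ℝ), 0 < Km → Km ≤ K → K ≤ Kp → 0 < h → 0 < b →
        h / Km ≤ b ^ 2 →
        ∀ w : EuclideanSpace ℝ (Fin (n - 1)) → ℝ, Measurable w →
          (∀ x' : EuclideanSpace ℝ (Fin (n - 1)), ‖x'‖ < b →
            Km * ‖x'‖ ^ 2 ≤ w x' ∧ w x' ≤ Kp * ‖x'‖ ^ 2) →
        ∀ τ : ℝ, 0 < τ →
        ∀ v : EuclideanSpace ℝ (Fin (n - 1)), ‖v‖ = 1 →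
          ‖((∫ x in {x : EuclideanSpace ℝ (Fin (n - 1)) × ℝ | K * ‖x.1‖ ^ 2 < x.2 ∧ x.2 < h},
                Complex.exp (Complex.I * (τ : ℂ) * ((inner ℝ v x.1 : ℝ) : ℂ) - (τ : ℂ) * (x.2 : ℂ)))
              - ∫ x in {x : EuclideanSpace ℝ (Fin (n - 1)) × ℝ | ‖x.1‖ < b ∧ w x.1 < x.2 ∧ x.2 < h},
                Complex.exp (Complex.I * (τ : ℂ) * ((inner ℝ v x.1 : ℝ) : ℂ) - (τ : ℂ) * (x.2 : ℂ)))‖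
            ≤ C * (Km ^ (-(((n : ℝ) - 1) / 2)) - Kp ^ (-(((n : ℝ) - 1) / 2)))
                * τ ^ (-(((n : ℝ) + 1) / 2)) := by
  set m : ℝ := ((n : ℝ) - 1) / 2 with hm
  refine ⟨Real.pi ^ m, Real.rpow_pos_of_pos Real.pi_pos m, ?_⟩
  intro Km K Kp h b hKm hKmK hKKp hh hb hbsq w hw hwb τ hτ v hv
  set f : EuclideanSpace ℝ (Fin (n - 1)) × ℝ → ℂ := fun x =>
    Complex.exp (Complex.I * (τ : ℂ) * ((inner ℝ v x.1 : ℝ) : ℂ) - (τ : ℂ) * (x.2 : ℂ)) with hfdef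
  set g : EuclideanSpace ℝ (Fin (n - 1)) × ℝ → ℝ := fun x => Real.exp (-τ * x.2) with hgdef
  set A : Set (EuclideanSpace ℝ (Fin (n - 1)) × ℝ) := {x | K * ‖x.1‖ ^ 2 < x.2 ∧ x.2 < h} with hAdef
  set B : Set (EuclideanSpace ℝ (Fin (n - 1)) × ℝ) := {x | ‖x.1‖ < b ∧ w x.1 < x.2 ∧ x.2 < h} with hBdef
  set D : Set (EuclideanSpace ℝ (Fin (n - 1)) × ℝ) := {x | Km * ‖x.1‖ ^ 2 ≤ x.2 ∧ x.2 ≤ Kp * ‖x.1‖ ^ 2 ∧ x.2 ≤ h} with hDdef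
  set T : Set (EuclideanSpace ℝ (Fin (n - 1)) × ℝ) := {x | Km * ‖x.1‖ ^ 2 ≤ x.2 ∧ x.2 ≤ h} with hTdef
  -- basic facts
  have hnormf : ∀ x : EuclideanSpace ℝ (Fin (n - 1)) × ℝ, ‖f x‖ = g x := by
    intro x
    rw [hfdef, hgdef]
    simp only [Complex.norm_exp]
    congr 1
    simp [Complex.sub_re, Complex.mul_re]
    try ring
  have hcf : Continuous f := by
    apply Complex.continuous_exp.comp
    apply Continuous.sub
    · exact continuous_const.mul
        (Complex.continuous_ofReal.comp (Continuous.inner continuous_const continuous_fst))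
    · exact continuous_const.mul (Complex.continuous_ofReal.comp continuous_snd)
  have hcg : Continuous g :=
    Real.continuous_exp.comp (continuous_const.mul continuous_snd)
  have hA : MeasurableSet A := by
    rw [hAdef, Set.setOf_and]
    exact (measurableSet_lt (by fun_prop) measurable_snd).inter
      (measurableSet_lt measurable_snd measurable_const)
  have hB : MeasurableSet B := by
    rw [hBdef, Set.setOf_and, Set.setOf_and]
    exact (measurableSet_lt (by fun_prop) measurable_const).inter
      ((measurableSet_lt (hw.comp measurable_fst) measurable_snd).inter
        (measurableSet_lt measurable_snd measurable_const))
  have hD : MeasurableSet D := by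
    rw [hDdef, Set.setOf_and, Set.setOf_and]
    exact (measurableSet_le (by fun_prop) measurable_snd).inter
      ((measurableSet_le measurable_snd (by fun_prop)).inter
        (measurableSet_le measurable_snd measurable_const))
  have hT : MeasurableSet T := by
    rw [hTdef, Set.setOf_and]
    exact (measurableSet_le (by fun_prop) measurable_snd).inter
      (measurableSet_le measurable_snd measurable_const)
  -- subset facts
  have hAT : A ⊆ T := by
    rintro x ⟨h1, h2⟩
    exact ⟨by nlinarith [sq_nonneg ‖x.1‖], h2.le⟩
  have hBT : B ⊆ T := by
    rintro x ⟨h1, h2, h3⟩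
    exact ⟨le_trans (hwb x.1 h1).1 h2.le, h3.le⟩
  have hDT : D ⊆ T := by
    rintro x ⟨h1, h2, h3⟩
    exact ⟨h1, h3⟩
  -- the dominating product function
  have hGint : Integrable (fun x : EuclideanSpace ℝ (Fin (n - 1)) × ℝ =>
      Real.exp (-(τ * Km) * ‖x.1‖ ^ 2) * Set.indicator (Set.Icc 0 h) (fun _ => 1) x.2) := by
    rw [MeasureTheory.Measure.volume_eq_prod]
    exact (my_integrable_gauss (mul_pos hτ hKm)).mul_prod
      ((integrable_indicator_iff measurableSet_Icc).2
        (integrableOn_const measure_Icc_lt_top.ne))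
  have hTg : Integrable (T.indicator g) := by
    refine hGint.mono' ((hcg.aestronglyMeasurable).indicator hT)
      (Filter.Eventually.of_forall fun x => ?_)
    by_cases hx : x ∈ T
    · rw [Set.indicator_of_mem hx, Real.norm_eq_abs, abs_of_nonneg (Real.exp_nonneg _)]
      obtain ⟨h1, h2⟩ := hx
      have hx2 : x.2 ∈ Set.Icc (0:ℝ) h :=
        ⟨le_trans (by positivity) h1, h2⟩
      rw [Set.indicator_of_mem hx2, mul_one]
      exact Real.exp_le_exp.2 (by nlinarith)
    · rw [Set.indicator_of_notMem hx, norm_zero]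
      have : (0:ℝ) ≤ Set.indicator (Set.Icc 0 h) (fun _ => (1:ℝ)) x.2 :=
        Set.indicator_nonneg (fun _ _ => zero_le_one) _
      positivity
  -- integrability of the indicators of f on A, B, and of g on D
  have hind : ∀ (S : Set (EuclideanSpace ℝ (Fin (n - 1)) × ℝ)), MeasurableSet S → S ⊆ T → Integrable (S.indicator f) := by
    intro S hS hST
    refine hTg.mono' ((hcf.aestronglyMeasurable).indicator hS)
      (Filter.Eventually.of_forall fun x => ?_)
    by_cases hx : x ∈ S
    · rw [Set.indicator_of_mem hx, hnormf, Set.indicator_of_mem (hST hx)]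
    · rw [Set.indicator_of_notMem hx, norm_zero]
      exact Set.indicator_nonneg (fun y _ => Real.exp_nonneg _) _
  have hDg : Integrable (D.indicator g) := by
    refine hTg.mono' ((hcg.aestronglyMeasurable).indicator hD)
      (Filter.Eventually.of_forall fun x => ?_)
    by_cases hx : x ∈ D
    · rw [Set.indicator_of_mem hx, Set.indicator_of_mem (hDT hx), Real.norm_eq_abs,
        abs_of_nonneg (Real.exp_nonneg _)]
    · rw [Set.indicator_of_notMem hx, norm_zero]
      exact Set.indicator_nonneg (fun y _ => Real.exp_nonneg _) _
  -- pointwise bound on the difference of the indicators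
  have hpt : ∀ x, ‖A.indicator f x - B.indicator f x‖ ≤ D.indicator g x := by
    intro x
    have hDnn : (0:ℝ) ≤ D.indicator g x :=
      Set.indicator_nonneg (fun y _ => Real.exp_nonneg _) _
    by_cases hxA : x ∈ A <;> by_cases hxB : x ∈ B
    · rw [Set.indicator_of_mem hxA, Set.indicator_of_mem hxB, sub_self, norm_zero]
      exact hDnn
    · rw [Set.indicator_of_mem hxA, Set.indicator_of_notMem hxB, sub_zero, hnormf]
      obtain ⟨h1, h2⟩ := hxA
      have hs : ‖x.1‖ ^ 2 < b ^ 2 := by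
        have h3 : ‖x.1‖ ^ 2 < h / K := by
          rw [lt_div_iff₀ (lt_of_lt_of_le hKm hKmK)]
          nlinarith
        have h4 : h / K ≤ h / Km := by
          apply div_le_div_of_nonneg_left hh.le hKm hKmK
        linarith
      have hxb : ‖x.1‖ < b := lt_of_pow_lt_pow_left₀ 2 hb.le hs
      have hxw : x.2 ≤ w x.1 := by
        by_contra hc
        exact hxB ⟨hxb, lt_of_not_ge hc, h2⟩
      have hxD : x ∈ D :=
        ⟨by nlinarith [sq_nonneg ‖x.1‖], le_trans hxw (hwb x.1 hxb).2, h2.le⟩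
      rw [Set.indicator_of_mem hxD]
    · rw [Set.indicator_of_notMem hxA, Set.indicator_of_mem hxB, zero_sub, norm_neg, hnormf]
      obtain ⟨h1, h2, h3⟩ := hxB
      have hxK : x.2 ≤ K * ‖x.1‖ ^ 2 := by
        by_contra hc
        exact hxA ⟨lt_of_not_ge hc, h3⟩
      have hxD : x ∈ D :=
        ⟨le_trans (hwb x.1 h1).1 h2.le, by nlinarith [sq_nonneg ‖x.1‖], h3.le⟩
      rw [Set.indicator_of_mem hxD]
    · rw [Set.indicator_of_notMem hxA, Set.indicator_of_notMem hxB, sub_self, norm_zero]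
      exact hDnn
  -- main norm bound
  rw [← integral_indicator hA, ← integral_indicator hB,
    ← integral_sub (hind A hA hAT) (hind B hB hBT)]
  have step1 : ‖∫ x, (A.indicator f x - B.indicator f x)‖ ≤ ∫ x, D.indicator g x :=
    norm_integral_le_of_norm_le hDg (Filter.Eventually.of_forall hpt)
  refine le_trans step1 ?_
  -- Fubini
  have hDg' : Integrable (D.indicator g) ((volume : Measure (EuclideanSpace ℝ (Fin (n - 1)))).prod volume) := by
    rwa [← MeasureTheory.Measure.volume_eq_prod]
  have hfub : ∫ x, D.indicator g x = ∫ x₁, ∫ t, D.indicator g (x₁, t) := by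
    rw [MeasureTheory.Measure.volume_eq_prod]
    exact MeasureTheory.integral_prod _ hDg'
  rw [hfub]
  -- the slice of D is an interval
  have hslice : ∀ x₁ : EuclideanSpace ℝ (Fin (n - 1)), (fun t => D.indicator g (x₁, t))
      = Set.indicator (Set.Icc (Km * ‖x₁‖ ^ 2) (min (Kp * ‖x₁‖ ^ 2) h))
          (fun t => Real.exp (-τ * t)) := by
    intro x₁
    funext t
    simp only [Set.indicator_apply]
    have hiff : ((x₁, t) ∈ D) ↔ t ∈ Set.Icc (Km * ‖x₁‖ ^ 2) (min (Kp * ‖x₁‖ ^ 2) h) := by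
      simp [hDdef, Set.mem_setOf_eq, Set.mem_Icc, le_min_iff, and_assoc]
    rw [if_congr hiff rfl rfl]
  have hinner_le : ∀ x₁ : EuclideanSpace ℝ (Fin (n - 1)), ∫ t, D.indicator g (x₁, t)
      ≤ (Real.exp (-τ * (Km * ‖x₁‖ ^ 2)) - Real.exp (-τ * (Kp * ‖x₁‖ ^ 2))) / τ := by
    intro x₁
    rw [hslice x₁, integral_indicator measurableSet_Icc]
    exact my_inner_bound τ _ _ h hτ (by nlinarith [sq_nonneg ‖x₁‖])
  -- integrability of both sides of the pointwise bound
  have hmarg : Integrable (fun x₁ : EuclideanSpace ℝ (Fin (n - 1)) => ∫ t, D.indicator g (x₁, t)) :=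
    hDg'.integral_prod_left
  have gKm : Integrable (fun x₁ : EuclideanSpace ℝ (Fin (n - 1)) => Real.exp (-τ * (Km * ‖x₁‖ ^ 2))) := by
    refine (my_integrable_gauss (mul_pos hτ hKm)).congr
      (Filter.Eventually.of_forall fun x₁ => ?_)
    have e : ∀ s : ℝ, -(τ * Km) * s = -τ * (Km * s) := fun s => by ring
    simp only [e]
  have gKp : Integrable (fun x₁ : EuclideanSpace ℝ (Fin (n - 1)) => Real.exp (-τ * (Kp * ‖x₁‖ ^ 2))) := by
    refine (my_integrable_gauss (mul_pos hτ (lt_of_lt_of_le hKm (le_trans hKmK hKKp)))).congr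
      (Filter.Eventually.of_forall fun x₁ => ?_)
    have e : ∀ s : ℝ, -(τ * Kp) * s = -τ * (Kp * s) := fun s => by ring
    simp only [e]
  have hphi : Integrable (fun x₁ : EuclideanSpace ℝ (Fin (n - 1)) =>
      (Real.exp (-τ * (Km * ‖x₁‖ ^ 2)) - Real.exp (-τ * (Kp * ‖x₁‖ ^ 2))) / τ) :=
    (gKm.sub gKp).div_const τ
  have step2 : ∫ x₁, (∫ t, D.indicator g (x₁, t))
      ≤ ∫ x₁ : EuclideanSpace ℝ (Fin (n - 1)), (Real.exp (-τ * (Km * ‖x₁‖ ^ 2)) - Real.exp (-τ * (Kp * ‖x₁‖ ^ 2))) / τ :=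
    integral_mono hmarg hphi hinner_le
  refine le_trans step2 (le_of_eq ?_)
  -- compute the Gaussian integrals
  have hgaussint : ∀ k : ℝ, 0 < k →
      ∫ x₁ : EuclideanSpace ℝ (Fin (n - 1)), Real.exp (-τ * (k * ‖x₁‖ ^ 2))
        = (Real.pi / (τ * k)) ^ ((Module.finrank ℝ (EuclideanSpace ℝ (Fin (n - 1))) : ℝ) / 2) := by
    intro k hk
    rw [← GaussianFourier.integral_rexp_neg_mul_sq_norm (mul_pos hτ hk)]
    have e : ∀ s : ℝ, -τ * (k * s) = -(τ * k) * s := fun s => by ring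
    simp only [e]
  have hKp' : (0:ℝ) < Kp := lt_of_lt_of_le hKm (le_trans hKmK hKKp)
  rw [integral_div, integral_sub gKm gKp, hgaussint Km hKm, hgaussint Kp hKp']
  -- final algebra
  have hd : (Module.finrank ℝ (EuclideanSpace ℝ (Fin (n - 1))) : ℝ) / 2 = m := by
    rw [hm]
    have : Module.finrank ℝ (EuclideanSpace ℝ (Fin (n - 1))) = n - 1 := finrank_euclideanSpace_fin
    rw [this, Nat.cast_sub (by omega : 1 ≤ n), Nat.cast_one]
  rw [hd, my_rpow_eq Real.pi_pos.le hτ hKm m, my_rpow_eq Real.pi_pos.le hτ hKp' m]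
  rw [show -(((n : ℝ) + 1) / 2) = (-m) + (-1) by rw [hm]; ring,
    Real.rpow_add hτ, Real.rpow_neg_one]
  field_simp
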